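/- Object cloning (SemClone): let α = [m_d :ν_d τ_d]_{d∈D} be an object type with each τ_d a semantic type. If Σ ⊨ a : α, then Σ ⊨ clone(a) : α. -/

import Mathlib

set_option maxHeartbeats 1000000

namespace ImpObj

/-! # Syntax of the imperative object calculus (type annotations erased) -/

abbrev Var := ℕ
abbrev MethName := ℕ
abbrev Loc := ℕ

inductive Variance : Type where
  | inv | cov | con
  deriving DecidableEq

inductive Tm : Type where
  | var    : Var → Tm
  | obj    : Finset MethName → (MethName → Var) → (MethName → Tm) → Tm
  | vobj   : Finset MethName → (MethName → Loc) → Tm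
  | inv    : Tm → MethName → Tm
  | upd    : Tm → MethName → Var → Tm → Tm
  | clone  : Tm → Tm
  | lam    : Var → Tm → Tm
  | app    : Tm → Tm → Tm
  | fold   : Tm → Tm
  | unfd   : Tm → Tm
  | tlam   : Tm → Tm
  | tapp   : Tm → Tm
  | pack   : Tm → Tm
  | opn    : Tm → Var → Tm → Tm

/-- Free (term) variables. -/
def fv : Tm → Set Var
  | .var x => {x}
  | .obj D xs bs => ⋃ d ∈ D, (fv (bs d) \ {xs d})
  | .vobj _ _ => ∅
  | .inv a _ => fv a
  | .upd a _ x b => fv a ∪ (fv b \ {x})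
  | .clone a => fv a
  | .lam x b => fv b \ {x}
  | .app a b => fv a ∪ fv b
  | .fold a => fv a
  | .unfd a => fv a
  | .tlam a => fv a
  | .tapp a => fv a
  | .pack a => fv a
  | .opn a x b => fv a ∪ (fv b \ {x})

/-- Heap locations occurring in a term. -/
def locs : Tm → Set Loc
  | .var _ => ∅
  | .obj D _ bs => ⋃ d ∈ D, locs (bs d)
  | .vobj E ls => ls '' ↑E
  | .inv a _ => locs a
  | .upd a _ _ b => locs a ∪ locs b
  | .clone a => locs a
  | .lam _ b => locs b
  | .app a b => locs a ∪ locs b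
  | .fold a => locs a
  | .unfd a => locs a
  | .tlam a => locs a
  | .tapp a => locs a
  | .pack a => locs a
  | .opn a _ b => locs a ∪ locs b

/-- Values. -/
inductive IsVal : Tm → Prop where
  | vobj (E : Finset MethName) (ls : MethName → Loc) : IsVal (.vobj E ls)
  | lam (x : Var) (b : Tm) : IsVal (.lam x b)
  | fold {v : Tm} : IsVal v → IsVal (.fold v)
  | tlam (b : Tm) : IsVal (.tlam b)
  | pack {v : Tm} : IsVal v → IsVal (.pack v)

/-- Closed values. -/
def CVal : Type := {v : Tm // IsVal v ∧ fv v = ∅}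

/-- A run-time object is a closed value. -/
def CVal.mkVObj (E : Finset MethName) (ls : MethName → Loc) : CVal :=
  ⟨.vobj E ls, IsVal.vobj E ls, by simp [fv]⟩

def removeKey (σ : Var → Option Tm) (x : Var) : Var → Option Tm :=
  fun y => if y = x then none else σ y

/-- Simultaneous substitution of (closed) terms for free variables. -/
def msubst : Tm → (Var → Option Tm) → Tm
  | .var x, σ => (σ x).getD (.var x)
  | .obj D xs bs, σ => .obj D xs fun d => msubst (bs d) (removeKey σ (xs d))
  | .vobj E ls, _ => .vobj E ls
  | .inv a m, σ => .inv (msubst a σ) m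
  | .upd a m x b, σ => .upd (msubst a σ) m x (msubst b (removeKey σ x))
  | .clone a, σ => .clone (msubst a σ)
  | .lam x b, σ => .lam x (msubst b (removeKey σ x))
  | .app a b, σ => .app (msubst a σ) (msubst b σ)
  | .fold a, σ => .fold (msubst a σ)
  | .unfd a, σ => .unfd (msubst a σ)
  | .tlam a, σ => .tlam (msubst a σ)
  | .tapp a, σ => .tapp (msubst a σ)
  | .pack a, σ => .pack (msubst a σ)
  | .opn a x b, σ => .opn (msubst a σ) x (msubst b (removeKey σ x))

def subst1 (b : Tm) (x : Var) (v : Tm) : Tm :=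
  msubst b fun y => if y = x then some v else none

/-! # Heaps and small-step operational semantics -/

/-- Heaps: finite maps from locations to closed values. -/
structure Heap where
  fn : Loc → Option CVal
  fin : Set.Finite {l | fn l ≠ none}

def Heap.get? (h : Heap) (l : Loc) : Option Tm := (h.fn l).map Subtype.val

abbrev Config := Heap × Tm

/-- Evaluation contexts (left-to-right, call-by-value). -/
inductive ECtx : Type where
  | hole : ECtx
  | inv : ECtx → MethName → ECtx
  | upd : ECtx → MethName → Var → Tm → ECtx
  | clone : ECtx → ECtx
  | appL : ECtx → Tm → ECtx
  | appR : (v : Tm) → IsVal v → ECtx → ECtx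
  | fold : ECtx → ECtx
  | unfd : ECtx → ECtx
  | tapp : ECtx → ECtx
  | pack : ECtx → ECtx
  | opn : ECtx → Var → Tm → ECtx

def ECtx.plug : ECtx → Tm → Tm
  | .hole, a => a
  | .inv E m, a => .inv (E.plug a) m
  | .upd E m x b, a => .upd (E.plug a) m x b
  | .clone E, a => .clone (E.plug a)
  | .appL E b, a => .app (E.plug a) b
  | .appR v _ E, a => .app v (E.plug a)
  | .fold E, a => .fold (E.plug a)
  | .unfd E, a => .unfd (E.plug a)
  | .tapp E, a => .tapp (E.plug a)
  | .pack E, a => .pack (E.plug a)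
  | .opn E x b, a => .opn (E.plug a) x b

/-- Head (redex) reductions. -/
inductive Head : Config → Config → Prop where
  | obj {h h' : Heap} {D : Finset MethName} {xs : MethName → Var} {bs : MethName → Tm}
      {ls : MethName → Loc} :
      (∀ d ∈ D, h.fn (ls d) = none) →
      Set.InjOn ls ↑D →
      (∀ d ∈ D, h'.get? (ls d) = some (.lam (xs d) (bs d))) →
      (∀ l : Loc, (∀ d ∈ D, ls d ≠ l) → h'.fn l = h.fn l) →
      Head (h, .obj D xs bs) (h', .vobj D ls)
  | inv {h : Heap} {E : Finset MethName} {ls : MethName → Loc} {e : MethName} {f : Tm} :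
      e ∈ E → h.get? (ls e) = some f →
      Head (h, .inv (.vobj E ls) e) (h, .app f (.vobj E ls))
  | upd {h h' : Heap} {E : Finset MethName} {ls : MethName → Loc} {e : MethName}
      {x : Var} {b : Tm} :
      e ∈ E →
      h'.get? (ls e) = some (.lam x b) →
      (∀ l : Loc, l ≠ ls e → h'.fn l = h.fn l) →
      Head (h, .upd (.vobj E ls) e x b) (h', .vobj E ls)
  | clone {h h' : Heap} {E : Finset MethName} {ls ls' : MethName → Loc} :
      (∀ e ∈ E, h.fn (ls' e) = none) →
      Set.InjOn ls' ↑E →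
      (∀ e ∈ E, h'.fn (ls' e) = h.fn (ls e)) →
      (∀ l : Loc, (∀ e ∈ E, ls' e ≠ l) → h'.fn l = h.fn l) →
      Head (h, .clone (.vobj E ls)) (h', .vobj E ls')
  | beta {h : Heap} {x : Var} {b v : Tm} :
      IsVal v → Head (h, .app (.lam x b) v) (h, subst1 b x v)
  | unfold {h : Heap} {v : Tm} : IsVal v → Head (h, .unfd (.fold v)) (h, v)
  | tbeta {h : Heap} {b : Tm} : Head (h, .tapp (.tlam b)) (h, b)
  | openv {h : Heap} {v : Tm} {x : Var} {b : Tm} :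
      IsVal v → Head (h, .opn (.pack v) x b) (h, subst1 b x v)

/-- One-step reduction: closure of head reduction under evaluation contexts. -/
inductive Step : Config → Config → Prop where
  | ctx {h h' : Heap} {a a' : Tm} (E : ECtx) :
      Head (h, a) (h', a') → Step (h, E.plug a) (h', E.plug a')

/-- `k`-step reduction. -/
inductive StepN : ℕ → Config → Config → Prop where
  | refl (c : Config) : StepN 0 c c
  | tail {n : ℕ} {c c' c'' : Config} : StepN n c c' → Step c' c'' → StepN (n + 1) c c''

def Irred (c : Config) : Prop := ¬ ∃ c', Step c c'

/-- Safe for `k` steps. -/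
def SafeN (c : Config) (k : ℕ) : Prop :=
  ∀ j < k, ∀ c' : Config, StepN j c c' → Irred c' → IsVal c'.2

/-- Safe (for any number of steps). -/
def Safe (c : Config) : Prop := ∀ k, SafeN c k

/-! # The stratified step-indexed universe of pre-types -/

/-- `Approx k` is (the type of elements of) `PreType_k`: sets of triples `(j, Ψ, v)`
with `j < k` and `Ψ ∈ HeapPreTyping_j` a finite map from locations to `PreType_j`. -/
def Approx : ℕ → Type :=
  WellFounded.fix (Nat.lt_wfRel.wf) fun k ih =>
    Set ((j : Fin k) × ({Ψ : Loc → Option (ih j.1 j.isLt) // Set.Finite {l | Ψ l ≠ none}} × CVal))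

/-- Heap pre-typings of level `j`: finite maps from locations to `PreType_j`. -/
def HPT (j : ℕ) : Type :=
  {Ψ : Loc → Option (Approx j) // Set.Finite {l | Ψ l ≠ none}}

theorem Approx_eq (k : ℕ) :
    Approx k = Set ((j : Fin k) × (HPT j.1 × CVal)) :=
  WellFounded.fix_eq _ _ _

def Approx.out {k : ℕ} (S : Approx k) : Set ((j : Fin k) × (HPT j.1 × CVal)) :=
  cast (Approx_eq k) S

def Approx.mk' {k : ℕ} (S : Set ((j : Fin k) × (HPT j.1 × CVal))) : Approx k :=
  cast (Approx_eq k).symm S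

/-- Triples `(j, Ψ, v)` with `Ψ ∈ HeapPreTyping_j` and `v` a closed value. -/
def Triple : Type := (j : ℕ) × (HPT j × CVal)

/-- Pre-types: arbitrary sets of triples. -/
abbrev PreType : Type := Set Triple

/-- View an element of `PreType_k` as a pre-type. -/
def Approx.seg {k : ℕ} (S : Approx k) : PreType :=
  {t | ∃ hlt : t.1 < k, (⟨⟨t.1, hlt⟩, t.2⟩ : (j : Fin k) × (HPT j.1 × CVal)) ∈ S.out}

/-- The `k`-th approximation `⌊τ⌋_k` of a pre-type. -/
def papprox (τ : PreType) (k : ℕ) : PreType := {t ∈ τ | t.1 < k}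

/-- The `k`-th approximation of a pre-type, as an element of `PreType_k`. -/
def toApprox (τ : PreType) (k : ℕ) : Approx k :=
  Approx.mk' {p | (⟨p.1.1, p.2⟩ : Triple) ∈ τ}

def HPT.dom {k : ℕ} (Ψ : HPT k) : Set Loc := {l | Ψ.1 l ≠ none}

/-- `Ψ(l)`, viewed as a pre-type. -/
def HPT.look {k : ℕ} (Ψ : HPT k) (l : Loc) : Option PreType := (Ψ.1 l).map Approx.seg

/-- `⌊Ψ⌋_j(l) = ⌊Ψ(l)⌋_j`, viewed as a pre-type. -/
def HPT.lookA {k : ℕ} (Ψ : HPT k) (j : ℕ) (l : Loc) : Option PreType :=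
  (Ψ.look l).map (papprox · j)

/-- Pointwise approximation `⌊Ψ⌋_j` of a heap pre-typing. -/
def HPT.trunc {k : ℕ} (Ψ : HPT k) (j : ℕ) : HPT j :=
  ⟨fun l => (Ψ.1 l).map fun S => toApprox (Approx.seg S) j, by
    apply Ψ.2.subset
    intro l hl
    simp only [Set.mem_setOf_eq] at hl ⊢
    intro h0
    rw [h0] at hl
    exact hl rfl⟩

/-- A state `(k, Ψ)`. -/
structure St where
  k : ℕ
  Ψ : HPT k

/-- State extension `(k, Ψ) ⊑ (j, Ψ')`. -/
def StExt (s t : St) : Prop :=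
  t.k ≤ s.k ∧ s.Ψ.dom ⊆ t.Ψ.dom ∧ ∀ l ∈ s.Ψ.dom, t.Ψ.lookA t.k l = s.Ψ.lookA t.k l

/-- Semantic types: pre-types closed under state extension. -/
def IsSemType (τ : PreType) : Prop :=
  ∀ t ∈ τ, ∀ (j : ℕ) (Ψ' : HPT j),
    StExt ⟨t.1, t.2.1⟩ ⟨j, Ψ'⟩ → (⟨j, Ψ', t.2.2⟩ : Triple) ∈ τ

/-- Heap typings: heap pre-typings all of whose entries are semantic types. -/
def HPT.IsTy {k : ℕ} (Ψ : HPT k) : Prop :=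
  ∀ l S, Ψ.1 l = some S → IsSemType (Approx.seg S)

/-- Well-typed heap `h :_k Ψ`. -/
def HeapOk (h : Heap) {k : ℕ} (Ψ : HPT k) : Prop :=
  (∀ l ∈ Ψ.dom, h.fn l ≠ none) ∧
  ∀ j < k, ∀ l S, Ψ.1 l = some S → ∀ v : CVal, h.fn l = some v →
    (⟨j, Ψ.trunc j, v⟩ : Triple) ∈ Approx.seg S

/-- A closed term has type `τ` with respect to the state `(k, Ψ)`:  `a :_{k,Ψ} τ`. -/
def HasTypeAt (a : Tm) {k : ℕ} (Ψ : HPT k) (τ : PreType) : Prop :=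
  ∀ j < k, ∀ (h h' : Heap) (b : Tm),
    HeapOk h Ψ → StepN j (h, a) (h', b) → Irred (h', b) →
    ∃ Ψ' : HPT (k - j), Ψ'.IsTy ∧ StExt ⟨k, Ψ⟩ ⟨k - j, Ψ'⟩ ∧ HeapOk h' Ψ' ∧
      ∃ hb : IsVal b ∧ fv b = ∅, (⟨k - j, Ψ', ⟨b, hb⟩⟩ : Triple) ∈ τ

/-! # Semantic typing judgement -/

/-- Semantic type environments. -/
def SemEnv : Type := Var → Option PreType

/-- All types in the environment are semantic types. -/
def EnvSem (Γ : SemEnv) : Prop := ∀ x τ, Γ x = some τ → IsSemType τ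

def envExt (Γ : SemEnv) (x : Var) (τ : PreType) : SemEnv :=
  fun y => if y = x then some τ else Γ y

/-- Value environments. -/
def VEnv : Type := Var → Option CVal

/-- `σ :_{k,Ψ} Σ`. -/
def EnvOk (σ : VEnv) {k : ℕ} (Ψ : HPT k) (Γ : SemEnv) : Prop :=
  ∀ x τ, Γ x = some τ → ∃ v : CVal, σ x = some v ∧ HasTypeAt v.1 Ψ τ

def toSubst (σ : VEnv) : Var → Option Tm := fun x => (σ x).map Subtype.val

/-- The semantic typing judgement `Σ ⊨ a : τ`. -/
def SemJudg (Γ : SemEnv) (a : Tm) (τ : PreType) : Prop :=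
  fv a ⊆ {x | Γ x ≠ none} ∧
  ∀ (k : ℕ) (Ψ : HPT k), Ψ.IsTy → ∀ σ : VEnv, EnvOk σ Ψ Γ →
    HasTypeAt (msubst a (toSubst σ)) Ψ τ

/-! # Semantic type constructors -/

def botTy : PreType := ∅
def topTy : PreType := Set.univ

/-- Procedure types `α → β`. -/
def arrTy (α β : PreType) : PreType :=
  {t | ∃ (x : Var) (b : Tm), t.2.2.1 = Tm.lam x b ∧
    ∀ j < t.1, ∀ Ψ' : HPT j, Ψ'.IsTy → ∀ v : CVal,
      StExt ⟨t.1, t.2.1⟩ ⟨j, Ψ'⟩ → (⟨j, Ψ', v⟩ : Triple) ∈ α →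
      HasTypeAt (subst1 b x v.1) Ψ' β}

/-- "Triples" whose value component is a heap location. -/
def RefEl : Type := (k : ℕ) × (HPT k × Loc)

/-- Invariant reference types. -/
def refInv (τ : PreType) : Set RefEl :=
  {p | ∃ S, p.2.1.1 p.2.2 = some S ∧ papprox (Approx.seg S) p.1 = papprox τ p.1}

/-- Readable (covariant) reference types. -/
def refCov (τ : PreType) : Set RefEl :=
  {p | ∃ S, p.2.1.1 p.2.2 = some S ∧ papprox (Approx.seg S) p.1 ⊆ papprox τ p.1}

/-- Writable (contravariant) reference types. -/
def refCon (τ : PreType) : Set RefEl :=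
  {p | ∃ S, p.2.1.1 p.2.2 = some S ∧ papprox τ p.1 ⊆ papprox (Approx.seg S) p.1}

def refTy : Variance → PreType → Set RefEl
  | .inv => refInv
  | .cov => refCov
  | .con => refCon

/-- Generalized reference types `ref(τʷ, τʳ)`. -/
def refGen (τw τr : PreType) : Set RefEl := refTy .con τw ∩ refTy .cov τr

/-- Closure under state extension for sets of location-triples. -/
def RefClosed (R : Set RefEl) : Prop :=
  ∀ p ∈ R, ∀ (j : ℕ) (Ψ' : HPT j),
    StExt ⟨p.1, p.2.1⟩ ⟨j, Ψ'⟩ → (⟨j, Ψ', p.2.2⟩ : RefEl) ∈ R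

/-- Object types `[m_d :ν_d τ_d]_{d∈D}` (membership of `(k, Ψ, w)`). -/
def objSlice (D : Finset MethName) (ν : MethName → Variance) (τs : MethName → PreType)
    (k : ℕ) (Ψ : HPT k) (w : CVal) : Prop :=
  ∃ (E : Finset MethName) (ls : MethName → Loc),
    w.1 = Tm.vobj E ls ∧ D ⊆ E ∧
    ∃ α' : PreType, IsSemType α' ∧
      papprox α' k ⊆ {t : Triple | ∃ _hlt : t.1 < k, objSlice D ν τs t.1 t.2.1 t.2.2} ∧
      (∀ d ∈ D, (⟨k, Ψ, ls d⟩ : RefEl) ∈ refTy (ν d) (arrTy α' (τs d))) ∧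
      (∀ j, ∀ _hj : j < k, ∀ Ψ' : HPT j, ∀ ls' : MethName → Loc,
        StExt ⟨k, Ψ⟩ ⟨j, Ψ'⟩ →
        (∀ e ∈ E, Ψ'.lookA j (ls' e) = Ψ.lookA j (ls e)) →
        (⟨j, Ψ'.trunc j, CVal.mkVObj E ls'⟩ : Triple) ∈ α')
  termination_by k
  decreasing_by exact _hlt

def objTy (D : Finset MethName) (ν : MethName → Variance) (τs : MethName → PreType) :
    PreType :=
  {t | objSlice D ν τs t.1 t.2.1 t.2.2}

/-- Generalized object types `[m_d : τʷ_d / τʳ_d]_{d∈D}` (membership of `(k, Ψ, w)`). -/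
def objSliceG (D : Finset MethName) (τw τr : MethName → PreType)
    (k : ℕ) (Ψ : HPT k) (w : CVal) : Prop :=
  ∃ (E : Finset MethName) (ls : MethName → Loc),
    w.1 = Tm.vobj E ls ∧ D ⊆ E ∧
    ∃ α' : PreType, IsSemType α' ∧
      papprox α' k ⊆ {t : Triple | ∃ _hlt : t.1 < k, objSliceG D τw τr t.1 t.2.1 t.2.2} ∧
      (∀ d ∈ D, (⟨k, Ψ, ls d⟩ : RefEl) ∈ refGen (arrTy α' (τw d)) (arrTy α' (τr d))) ∧
      (∀ j, ∀ _hj : j < k, ∀ Ψ' : HPT j, ∀ ls' : MethName → Loc,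
        StExt ⟨k, Ψ⟩ ⟨j, Ψ'⟩ →
        (∀ e ∈ E, Ψ'.lookA j (ls' e) = Ψ.lookA j (ls e)) →
        (⟨j, Ψ'.trunc j, CVal.mkVObj E ls'⟩ : Triple) ∈ α')
  termination_by k
  decreasing_by exact _hlt

def objTyG (D : Finset MethName) (τw τr : MethName → PreType) : PreType :=
  {t | objSliceG D τw τr t.1 t.2.1 t.2.2}

/-- Non-expansive type constructors. -/
def NonExpansive (F : PreType → PreType) : Prop :=
  ∀ τ : PreType, IsSemType τ → ∀ k : ℕ, papprox (F τ) k = papprox (F (papprox τ k)) k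

/-- `F` maps semantic types to semantic types. -/
def SemPreserving (F : PreType → PreType) : Prop :=
  ∀ τ : PreType, IsSemType τ → IsSemType (F τ)

/-- Bounded universal types `∀_α F`. -/
def allTy (α : PreType) (F : PreType → PreType) : PreType :=
  {t | ∃ a : Tm, t.2.2.1 = Tm.tlam a ∧
    ∀ (j : ℕ) (Ψ' : HPT j), Ψ'.IsTy → ∀ τ : PreType, IsSemType τ →
      StExt ⟨t.1, t.2.1⟩ ⟨j, Ψ'⟩ → papprox τ j ⊆ papprox α j →
      ∀ i < j, HasTypeAt a (Ψ'.trunc i) (F τ)}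

/-- Bounded existential types `∃_α F`. -/
def exTy (α : PreType) (F : PreType → PreType) : PreType :=
  {t | ∃ v : CVal, t.2.2.1 = Tm.pack v.1 ∧
    ∃ τ : PreType, IsSemType τ ∧ papprox τ t.1 ⊆ papprox α t.1 ∧
      ∀ j < t.1, (⟨j, t.2.1.trunc j, v⟩ : Triple) ∈ F τ}

/-- Iso-recursive types `μF` (membership of `(k, Ψ, w)`). -/
def muMem (F : PreType → PreType) (k : ℕ) (Ψ : HPT k) (w : CVal) : Prop :=
  ∃ v : CVal, w.1 = Tm.fold v.1 ∧
    ∀ j, j < k →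
      (⟨j, Ψ.trunc j, v⟩ : Triple) ∈
        F {t : Triple | ∃ _hlt : t.1 < k, muMem F t.1 t.2.1 t.2.2}
  termination_by k
  decreasing_by exact _hlt

def muTy (F : PreType → PreType) : PreType := {t | muMem F t.1 t.2.1 t.2.2}

/-- The defining property of the object type `[m_d :ν_d τ_d]_{d∈D}` (fixed-point form). -/
def ObjMemProp (D : Finset MethName) (ν : MethName → Variance) (τs : MethName → PreType)
    (α : PreType) (k : ℕ) (Ψ : HPT k) (w : CVal) : Prop :=
  ∃ (E : Finset MethName) (ls : MethName → Loc),
    w.1 = Tm.vobj E ls ∧ D ⊆ E ∧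
    ∃ α' : PreType, IsSemType α' ∧
      papprox α' k ⊆ papprox α k ∧
      (∀ d ∈ D, (⟨k, Ψ, ls d⟩ : RefEl) ∈ refTy (ν d) (arrTy α' (τs d))) ∧
      (∀ j < k, ∀ Ψ' : HPT j, ∀ ls' : MethName → Loc,
        StExt ⟨k, Ψ⟩ ⟨j, Ψ'⟩ →
        (∀ e ∈ E, Ψ'.lookA j (ls' e) = Ψ.lookA j (ls e)) →
        (⟨j, Ψ'.trunc j, CVal.mkVObj E ls'⟩ : Triple) ∈ α')

/-- `α` satisfies the recursive specification of the object type. -/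
def ObjFix (D : Finset MethName) (ν : MethName → Variance) (τs : MethName → PreType)
    (α : PreType) : Prop :=
  ∀ t : Triple, t ∈ α ↔ ObjMemProp D ν τs α t.1 t.2.1 t.2.2

/-- `α` satisfies the defining equivalence of the recursive type `μF` and
consists only of `fold`-values. -/
def MuFix (F : PreType → PreType) (α : PreType) : Prop :=
  (∀ t ∈ α, ∃ v : Tm, t.2.2.1 = Tm.fold v) ∧
  ∀ (k : ℕ) (Ψ : HPT k) (v : CVal) (hv : IsVal (Tm.fold v.1) ∧ fv (Tm.fold v.1) = ∅),
    (⟨k, Ψ, ⟨Tm.fold v.1, hv⟩⟩ : Triple) ∈ α ↔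
      ∀ j < k, (⟨j, Ψ.trunc j, v⟩ : Triple) ∈ F α

/-! # The syntactic type system -/

inductive SType : Type where
  | tvar : ℕ → SType
  | top : SType
  | bot : SType
  | arr : SType → SType → SType
  | obj : Finset MethName → (MethName → Variance) → (MethName → SType) → SType
  | mu : ℕ → SType → SType
  | all : ℕ → SType → SType → SType
  | ex : ℕ → SType → SType → SType

/-- Free type variables of a syntactic type. -/
def ftv : SType → Set ℕ
  | .tvar X => {X}
  | .top => ∅
  | .bot => ∅
  | .arr A B => ftv A ∪ ftv B
  | .obj D _ As => ⋃ d ∈ D, ftv (As d)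
  | .mu X A => ftv A \ {X}
  | .all X A B => ftv A ∪ (ftv B \ {X})
  | .ex X A B => ftv A ∪ (ftv B \ {X})

/-- Substitution `A[X ↦ C]` of a type for a type variable. -/
def tsubst : SType → ℕ → SType → SType
  | .tvar Y, X, C => if Y = X then C else .tvar Y
  | .top, _, _ => .top
  | .bot, _, _ => .bot
  | .arr A B, X, C => .arr (tsubst A X C) (tsubst B X C)
  | .obj D ν As, X, C => .obj D ν fun d => tsubst (As d) X C
  | .mu Y A, X, C => if Y = X then .mu Y A else .mu Y (tsubst A X C)
  | .all Y A B, X, C => .all Y (tsubst A X C) (if Y = X then B else tsubst B X C)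
  | .ex Y A B, X, C => .ex Y (tsubst A X C) (if Y = X then B else tsubst B X C)

/-- Context bindings: `X <: A` and `x : A`. -/
inductive Bind : Type where
  | tv : ℕ → SType → Bind
  | v : Var → SType → Bind

abbrev SCtx := List Bind

def tvDom (Γ : SCtx) : Set ℕ := {X | ∃ A, Bind.tv X A ∈ Γ}
def vDom (Γ : SCtx) : Set Var := {x | ∃ A, Bind.v x A ∈ Γ}

/-- Well-formed typing contexts. -/
inductive WfCtx : SCtx → Prop where
  | nil : WfCtx []
  | consV {Γ : SCtx} {x : Var} {A : SType} :
      WfCtx Γ → x ∉ vDom Γ → ftv A ⊆ tvDom Γ → WfCtx (Bind.v x A :: Γ)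
  | consT {Γ : SCtx} {X : ℕ} {A : SType} :
      WfCtx Γ → X ∉ tvDom Γ → ftv A ⊆ tvDom Γ → WfCtx (Bind.tv X A :: Γ)

/-- Well-formed types. -/
def WfTy (Γ : SCtx) (A : SType) : Prop := WfCtx Γ ∧ ftv A ⊆ tvDom Γ

/-- The subtyping judgement `Γ ⊢ A <: B`. -/
inductive Sub : SCtx → SType → SType → Prop where
  | refl {Γ A} : WfTy Γ A → Sub Γ A A
  | trans {Γ A A' B} : Sub Γ A A' → Sub Γ A' B → Sub Γ A B
  | top {Γ A} : WfTy Γ A → Sub Γ A .top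
  | bot {Γ A} : WfTy Γ A → Sub Γ .bot A
  | tvar {Γ X A} : WfCtx Γ → Bind.tv X A ∈ Γ → Sub Γ (.tvar X) A
  | arr {Γ A A' B B'} : Sub Γ A' A → Sub Γ B B' → Sub Γ (.arr A B) (.arr A' B')
  | obj {Γ} {D E : Finset MethName} {ν : MethName → Variance} {As Bs : MethName → SType} :
      E ⊆ D →
      (∀ e ∈ E, (ν e = .cov ∨ ν e = .inv) → Sub Γ (As e) (Bs e)) →
      (∀ e ∈ E, (ν e = .con ∨ ν e = .inv) → Sub Γ (Bs e) (As e)) →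
      Sub Γ (.obj D ν As) (.obj E ν Bs)
  | objvar {Γ} {D : Finset MethName} {ν ν' : MethName → Variance} {As : MethName → SType} :
      (∀ d ∈ D, ν d = .inv ∨ ν d = ν' d) →
      Sub Γ (.obj D ν As) (.obj D ν' As)
  | mu {Γ X Y A B} : WfTy Γ (.mu X A) → WfTy Γ (.mu Y B) →
      Sub (Bind.tv X (.tvar Y) :: Bind.tv Y .top :: Γ) A B →
      Sub Γ (.mu X A) (.mu Y B)
  | all {Γ X A A' B B'} : Sub Γ A' A → Sub (Bind.tv X A' :: Γ) B B' →
      Sub Γ (.all X A B) (.all X A' B')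
  | ex {Γ X A A' B B'} : Sub Γ A A' → Sub (Bind.tv X A :: Γ) B B' →
      Sub Γ (.ex X A B) (.ex X A' B')

/-- Type-annotated (source) terms. -/
inductive STm : Type where
  | var : Var → STm
  | obj : Finset MethName → (MethName → Variance) → (MethName → SType) →
      (MethName → Var) → (MethName → STm) → STm
  | inv : STm → MethName → STm
  | upd : STm → MethName → Var → SType → STm → STm
  | clone : STm → STm
  | lam : Var → SType → STm → STm
  | app : STm → STm → STm
  | fold : SType → STm → STm
  | unfd : SType → STm → STm
  | tlam : ℕ → SType → STm → STm
  | tapp : STm → SType → STm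
  | pack : ℕ → SType → SType → STm → SType → STm
  | opn : STm → ℕ → SType → Var → SType → STm → SType → STm

/-- Erasure of all type annotations. -/
def erase : STm → Tm
  | .var x => .var x
  | .obj D _ _ xs bs => .obj D xs fun d => erase (bs d)
  | .inv a m => .inv (erase a) m
  | .upd a m x _ b => .upd (erase a) m x (erase b)
  | .clone a => .clone (erase a)
  | .lam x _ b => .lam x (erase b)
  | .app a b => .app (erase a) (erase b)
  | .fold _ a => .fold (erase a)
  | .unfd _ a => .unfd (erase a)
  | .tlam _ _ b => .tlam (erase b)
  | .tapp a _ => .tapp (erase a)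
  | .pack _ _ _ a _ => .pack (erase a)
  | .opn a _ _ x _ b _ => .opn (erase a) x (erase b)

/-- Substitution `a[X ↦ C]` of a type for a type variable inside a term. -/
def stsubst : STm → ℕ → SType → STm
  | .var x, _, _ => .var x
  | .obj D ν As xs bs, X, C =>
      .obj D ν (fun d => tsubst (As d) X C) xs fun d => stsubst (bs d) X C
  | .inv a m, X, C => .inv (stsubst a X C) m
  | .upd a m x A b, X, C => .upd (stsubst a X C) m x (tsubst A X C) (stsubst b X C)
  | .clone a, X, C => .clone (stsubst a X C)
  | .lam x A b, X, C => .lam x (tsubst A X C) (stsubst b X C)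
  | .app a b, X, C => .app (stsubst a X C) (stsubst b X C)
  | .fold A a, X, C => .fold (tsubst A X C) (stsubst a X C)
  | .unfd A a, X, C => .unfd (tsubst A X C) (stsubst a X C)
  | .tlam Y A b, X, C =>
      .tlam Y (tsubst A X C) (if Y = X then b else stsubst b X C)
  | .tapp a A, X, C => .tapp (stsubst a X C) (tsubst A X C)
  | .pack Y A B a B', X, C =>
      .pack Y (tsubst A X C) (tsubst B X C)
        (if Y = X then a else stsubst a X C) (if Y = X then B' else tsubst B' X C)
  | .opn a Y A x B b Cr, X, C =>
      .opn (stsubst a X C) Y (tsubst A X C) x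
        (if Y = X then B else tsubst B X C) (if Y = X then b else stsubst b X C)
        (tsubst Cr X C)

/-- The typing judgement `Γ ⊢ a : A`. -/
inductive Ty : SCtx → STm → SType → Prop where
  | sub {Γ a A B} : Ty Γ a A → Sub Γ A B → Ty Γ a B
  | var {Γ x A} : WfCtx Γ → Bind.v x A ∈ Γ → Ty Γ (.var x) A
  | lam {Γ x A b B} : Ty (Bind.v x A :: Γ) b B → Ty Γ (.lam x A b) (.arr A B)
  | app {Γ a b A B} : Ty Γ a (.arr B A) → Ty Γ b B → Ty Γ (.app a b) A
  | obj {Γ} {D : Finset MethName} {ν : MethName → Variance} {As : MethName → SType}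
      {xs : MethName → Var} {bs : MethName → STm} :
      (∀ d ∈ D, Ty (Bind.v (xs d) (.obj D ν As) :: Γ) (bs d) (As d)) →
      Ty Γ (.obj D ν As xs bs) (.obj D ν As)
  | clone {Γ a} {D : Finset MethName} {ν : MethName → Variance} {As : MethName → SType} :
      Ty Γ a (.obj D ν As) → Ty Γ (.clone a) (.obj D ν As)
  | inv {Γ a} {D : Finset MethName} {ν : MethName → Variance} {As : MethName → SType}
      {e : MethName} :
      Ty Γ a (.obj D ν As) → e ∈ D → (ν e = .cov ∨ ν e = .inv) →
      Ty Γ (.inv a e) (As e)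
  | upd {Γ a} {D : Finset MethName} {ν : MethName → Variance} {As : MethName → SType}
      {e : MethName} {x : Var} {b : STm} :
      Ty Γ a (.obj D ν As) → e ∈ D →
      Ty (Bind.v x (.obj D ν As) :: Γ) b (As e) → (ν e = .con ∨ ν e = .inv) →
      Ty Γ (.upd a e x (.obj D ν As) b) (.obj D ν As)
  | unfold {Γ a X A} :
      Ty Γ a (.mu X A) → Ty Γ (.unfd (.mu X A) a) (tsubst A X (.mu X A))
  | fold {Γ a X A} :
      Ty Γ a (tsubst A X (.mu X A)) → Ty Γ (.fold (.mu X A) a) (.mu X A)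
  | tabs {Γ X A b B} : Ty (Bind.tv X A :: Γ) b B → Ty Γ (.tlam X A b) (.all X A B)
  | tapp {Γ a X A B A'} :
      Ty Γ a (.all X A B) → Sub Γ A' A → Ty Γ (.tapp a A') (tsubst B X A')
  | pack {Γ X A C a B} : Sub Γ C A → Ty Γ (stsubst a X C) (tsubst B X C) →
      Ty Γ (.pack X A C a B) (.ex X A B)
  | opn {Γ a X A x B b C} : Ty Γ a (.ex X A B) → WfTy Γ C →
      Ty (Bind.v x B :: Bind.tv X A :: Γ) b C →
      Ty Γ (.opn a X A x B b C) C

/-! # Interpretation of syntactic types -/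

/-- The interpretation `⟦A⟧η` of a syntactic type. -/
def interp : SType → (ℕ → PreType) → PreType
  | .tvar X, η => η X
  | .top, _ => topTy
  | .bot, _ => botTy
  | .arr A B, η => arrTy (interp A η) (interp B η)
  | .obj D ν As, η => objTy D ν fun d => interp (As d) η
  | .mu X A, η => muTy fun α => interp A (Function.update η X α)
  | .all X A B, η => allTy (interp A η) fun α => interp B (Function.update η X α)
  | .ex X A B, η => exTy (interp A η) fun α => interp B (Function.update η X α)

/-- `η ⊨ Γ`: `η` maps type variables to semantic types and respects the bounds in `Γ`. -/
def EnvModels (η : ℕ → PreType) (Γ : SCtx) : Prop :=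
  (∀ X, IsSemType (η X)) ∧ ∀ X A, Bind.tv X A ∈ Γ → η X ⊆ interp A η

/-- The semantic type environment `⟦Γ⟧η`. -/
def interpCtx (Γ : SCtx) (η : ℕ → PreType) : SemEnv :=
  fun x =>
    Γ.findSome? fun b =>
      match b with
      | Bind.v y A => if y = x then some (interp A η) else none
      | _ => none


/-! ## Auxiliary lemmas: approximations -/

theorem sc_out_mk' {k : ℕ} (S : Set ((j : Fin k) × (HPT j.1 × CVal))) :
    (Approx.mk' S).out = S := by
  simp [Approx.mk', Approx.out]

theorem sc_seg_toApprox (τ : PreType) (j : ℕ) :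
    Approx.seg (toApprox τ j) = papprox τ j := by
  ext t
  simp [Approx.seg, toApprox, sc_out_mk', papprox, and_comm]
  exact fun _ => Iff.rfl

theorem sc_papprox_papprox (τ : PreType) {m j : ℕ} (h : m ≤ j) :
    papprox (papprox τ j) m = papprox τ m := by
  ext t
  simp only [papprox, Set.mem_setOf_eq]
  constructor
  · rintro ⟨⟨h1, _⟩, h2⟩; exact ⟨h1, h2⟩
  · rintro ⟨h1, h2⟩; exact ⟨⟨h1, lt_of_lt_of_le h2 h⟩, h2⟩

theorem sc_papprox_subset (τ : PreType) {m j : ℕ} (h : m ≤ j) :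
    papprox τ m ⊆ papprox τ j := by
  rintro t ⟨h1, h2⟩; exact ⟨h1, lt_of_lt_of_le h2 h⟩

theorem sc_mem_papprox {τ : PreType} {t : Triple} {j : ℕ} :
    t ∈ papprox τ j ↔ t ∈ τ ∧ t.1 < j := Iff.rfl

theorem sc_IsSemType_papprox {τ : PreType} (hτ : IsSemType τ) (j : ℕ) :
    IsSemType (papprox τ j) := by
  rintro t ⟨ht, hlt⟩ m Ψ' hext
  exact ⟨hτ t ht m Ψ' hext, lt_of_le_of_lt hext.1 hlt⟩

theorem sc_trunc_fn {k : ℕ} (Ψ : HPT k) (j : ℕ) (l : Loc) :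
    (Ψ.trunc j).1 l = (Ψ.1 l).map (fun S => toApprox (Approx.seg S) j) := rfl

theorem sc_look_trunc {k : ℕ} (Ψ : HPT k) (j : ℕ) (l : Loc) :
    (Ψ.trunc j).look l = (Ψ.look l).map (papprox · j) := by
  simp only [HPT.look, sc_trunc_fn, Option.map_map]
  congr 1
  funext S
  simp [Function.comp, sc_seg_toApprox]

theorem sc_lookA_trunc {k : ℕ} (Ψ : HPT k) {m j : ℕ} (h : m ≤ j) (l : Loc) :
    (Ψ.trunc j).lookA m l = Ψ.lookA m l := by
  simp only [HPT.lookA, sc_look_trunc, Option.map_map]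
  cases Ψ.look l with
  | none => rfl
  | some τ => simp [Function.comp, sc_papprox_papprox _ h]

theorem sc_dom_trunc {k : ℕ} (Ψ : HPT k) (j : ℕ) :
    (Ψ.trunc j).dom = Ψ.dom := by
  ext l
  simp only [HPT.dom, Set.mem_setOf_eq, sc_trunc_fn]
  cases Ψ.1 l <;> simp

theorem sc_lookA_mono {k : ℕ} (Ψ : HPT k) {m j : ℕ} (h : m ≤ j) (l : Loc) :
    Ψ.lookA m l = (Ψ.lookA j l).map (papprox · m) := by
  simp only [HPT.lookA, Option.map_map]
  cases Ψ.look l with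
  | none => rfl
  | some τ => simp [Function.comp, sc_papprox_papprox _ h]

theorem sc_stext_trans {s t u : St} (h1 : StExt s t) (h2 : StExt t u) : StExt s u := by
  obtain ⟨hk1, hd1, hl1⟩ := h1
  obtain ⟨hk2, hd2, hl2⟩ := h2
  refine ⟨le_trans hk2 hk1, hd1.trans hd2, fun l hl => ?_⟩
  rw [hl2 l (hd1 hl), sc_lookA_mono t.Ψ hk2 l, hl1 l hl, ← sc_lookA_mono s.Ψ hk2 l]

theorem sc_look_eq_some {k : ℕ} (Ψ : HPT k) {l : Loc} {S : Approx k}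
    (h : Ψ.1 l = some S) : Ψ.look l = some (Approx.seg S) := by
  simp [HPT.look, h]

theorem sc_lookA_eq_some {k : ℕ} (Ψ : HPT k) {l : Loc} {S : Approx k}
    (h : Ψ.1 l = some S) (j : ℕ) : Ψ.lookA j l = some (papprox (Approx.seg S) j) := by
  simp [HPT.lookA, sc_look_eq_some Ψ h]

theorem sc_IsTy_trunc {k : ℕ} {Ψ : HPT k} (h : Ψ.IsTy) (j : ℕ) : (Ψ.trunc j).IsTy := by
  intro l S hS
  rw [sc_trunc_fn] at hS
  cases hΨ : Ψ.1 l with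
  | none => rw [hΨ] at hS; simp at hS
  | some S0 =>
    rw [hΨ] at hS
    simp only [Option.map_some] at hS
    obtain rfl := Option.some.inj hS
    rw [sc_seg_toApprox]
    exact sc_IsSemType_papprox (h l S0 hΨ) j

/-! ## Auxiliary lemmas: operational semantics -/

theorem sc_head_not_val {h : Heap} {a : Tm} {c : Config} (hd : Head (h, a) c) :
    ¬ IsVal a := by
  intro hv
  cases hd <;> cases hv

theorem sc_plug_val {E : ECtx} {a : Tm} (h : IsVal (E.plug a)) : IsVal a := by
  induction E with
  | hole => exact h
  | fold E ih => rw [ECtx.plug] at h; cases h with | fold h => exact ih h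
  | pack E ih => rw [ECtx.plug] at h; cases h with | pack h => exact ih h
  | _ => rw [ECtx.plug] at h; cases h

theorem sc_val_irred {v : Tm} (hv : IsVal v) (h : Heap) : Irred (h, v) := by
  rintro ⟨c, hs⟩
  cases hs with
  | ctx E hd => exact sc_head_not_val hd (sc_plug_val hv)

theorem sc_stepN_cons {n : ℕ} {c c' c'' : Config} (h1 : Step c c')
    (h2 : StepN n c' c'') : StepN (n + 1) c c'' := by
  induction h2 with
  | refl => exact StepN.tail (StepN.refl c) h1
  | tail hsn hs ih => exact StepN.tail (ih h1) hs

theorem sc_stepN_succ_inv {n : ℕ} {c c'' : Config} (h : StepN (n + 1) c c'') :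
    ∃ c', Step c c' ∧ StepN n c' c'' := by
  induction n generalizing c'' with
  | zero =>
    cases h with
    | tail h1 h2 => cases h1; exact ⟨c'', h2, StepN.refl c''⟩
  | succ m ih =>
    cases h with
    | tail h1 h2 =>
      obtain ⟨c', hs, hsn⟩ := ih h1
      exact ⟨c', hs, StepN.tail hsn h2⟩

theorem sc_step_clone_lift {h h' : Heap} {a a' : Tm} (hs : Step (h, a) (h', a')) :
    Step (h, Tm.clone a) (h', Tm.clone a') := by
  cases hs with
  | ctx E hd => exact Step.ctx (ECtx.clone E) hd

theorem sc_irred_zero {n : ℕ} {c c' : Config} (h : StepN n c c') (hi : Irred c) :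
    n = 0 ∧ c' = c := by
  cases n with
  | zero => cases h; exact ⟨rfl, rfl⟩
  | succ m =>
    obtain ⟨c₁, hs, _⟩ := sc_stepN_succ_inv h
    exact absurd ⟨c₁, hs⟩ hi

theorem sc_step_inv {c c' : Config} (hs : Step c c') :
    ∃ (E : ECtx) (h h' : Heap) (a a' : Tm),
      c = (h, E.plug a) ∧ c' = (h', E.plug a') ∧ Head (h, a) (h', a') := by
  cases hs with
  | ctx E hd => exact ⟨E, _, _, _, _, rfl, rfl, hd⟩

theorem sc_plug_clone_inv {E : ECtx} {a₀ a : Tm} (h : E.plug a₀ = Tm.clone a) :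
    (E = ECtx.hole ∧ a₀ = Tm.clone a) ∨ ∃ E', E = ECtx.clone E' ∧ a = E'.plug a₀ := by
  cases E <;> simp_all [ECtx.plug]

theorem sc_step_clone_inv {h : Heap} {a : Tm} {c : Config}
    (hs : Step (h, Tm.clone a) c) :
    (IsVal a ∧ Head (h, Tm.clone a) c) ∨
    (∃ h' a', Step (h, a) (h', a') ∧ c = (h', Tm.clone a')) := by
  obtain ⟨E, h0, h', a₀, a₀', heq1, heq2, hd⟩ := sc_step_inv hs
  have hh : h = h0 := congrArg Prod.fst heq1
  have ha : Tm.clone a = E.plug a₀ := congrArg Prod.snd heq1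
  subst hh
  rcases sc_plug_clone_inv ha.symm with ⟨hE, ha₀⟩ | ⟨E', hE, ha'⟩
  · subst hE; subst ha₀
    simp only [ECtx.plug] at heq2
    subst heq2
    cases hd with
    | clone h1 h2 h3 h4 =>
      exact Or.inl ⟨IsVal.vobj _ _, Head.clone h1 h2 h3 h4⟩
  · subst hE
    simp only [ECtx.plug] at heq2
    exact Or.inr ⟨h', E'.plug a₀', ha' ▸ Step.ctx E' hd, heq2⟩
open Classical in
/-- Overwrite `f` at locations `ls' e`, `e ∈ E`, with `g e`. -/
noncomputable def scCopy {β : Type _} (E : Finset MethName) (ls' : MethName → Loc)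
    (f : Loc → β) (g : MethName → β) : Loc → β :=
  fun l => if hl : ∃ e, e ∈ E ∧ ls' e = l then g hl.choose else f l

theorem sc_copy_mem {β : Type _} {E : Finset MethName} {ls' : MethName → Loc}
    (hinj : Set.InjOn ls' ↑E) {f : Loc → β} {g : MethName → β} {e : MethName}
    (he : e ∈ E) : scCopy E ls' f g (ls' e) = g e := by
  have hl : ∃ e', e' ∈ E ∧ ls' e' = ls' e := ⟨e, he, rfl⟩
  rw [scCopy, dif_pos hl]
  have h1 := hl.choose_spec
  have : hl.choose = e := hinj h1.1 he h1.2
  rw [this]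

theorem sc_copy_not {β : Type _} {E : Finset MethName} {ls' : MethName → Loc}
    {f : Loc → β} {g : MethName → β} {l : Loc}
    (hl : ∀ e ∈ E, ls' e ≠ l) : scCopy E ls' f g l = f l := by
  rw [scCopy, dif_neg]
  rintro ⟨e, he, heq⟩
  exact hl e he heq

theorem sc_copy_dom {β : Type _} {E : Finset MethName} {ls' : MethName → Loc}
    {f : Loc → β} {g : MethName → β} {z : β} :
    {l | scCopy E ls' f g l ≠ z} ⊆ {l | f l ≠ z} ∪ (ls' '' ↑E) := by
  intro l hl
  by_cases hc : ∃ e, e ∈ E ∧ ls' e = l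
  · obtain ⟨e, he, heq⟩ := hc
    exact Or.inr ⟨e, he, heq⟩
  · left
    rwa [Set.mem_setOf_eq, scCopy, dif_neg hc] at hl

theorem sc_clone_progress (h : Heap) (E : Finset MethName) (ls : MethName → Loc) :
    ∃ c, Head (h, Tm.clone (Tm.vobj E ls)) c := by
  classical
  obtain ⟨N, hN⟩ := h.fin.bddAbove
  have hfresh : ∀ e : MethName, h.fn (N + 1 + e) = none := by
    intro e
    by_contra hne
    have h2 : N + 1 + e ≤ N := hN hne
    exact absurd (le_trans (Nat.le_add_right (N + 1) e) h2) (Nat.not_succ_le_self N)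
  have hinj : Set.InjOn (fun e : MethName => N + 1 + e) ↑E := by
    intro x _ y _ hxy
    simpa using hxy
  have hfin : Set.Finite {l | scCopy E (fun e => N + 1 + e) h.fn
      (fun e => h.fn (ls e)) l ≠ none} :=
    (h.fin.union (E.finite_toSet.image _)).subset sc_copy_dom
  exact ⟨(⟨scCopy E (fun e => N + 1 + e) h.fn (fun e => h.fn (ls e)), hfin⟩,
      Tm.vobj E (fun e => N + 1 + e)),
    Head.clone (fun e _ => hfresh e) hinj
      (fun e he => sc_copy_mem (f := h.fn) (g := fun e => h.fn (ls e)) hinj he)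
      (fun l hl => sc_copy_not (f := h.fn) (g := fun e => h.fn (ls e)) hl)⟩

theorem sc_stepN_clone_decomp {j : ℕ} {h : Heap} {a : Tm} {c : Config}
    (hs : StepN j (h, Tm.clone a) c) (hirr : Irred c) :
    ∃ (i : ℕ) (h₁ : Heap) (a₁ : Tm), i ≤ j ∧ StepN i (h, a) (h₁, a₁) ∧ Irred (h₁, a₁) ∧
      ((i = j ∧ c = (h₁, Tm.clone a₁)) ∨
       (∃ c₂, i < j ∧ IsVal a₁ ∧ Head (h₁, Tm.clone a₁) c₂ ∧ StepN (j - i - 1) c₂ c)) := by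
  induction j generalizing h a c with
  | zero =>
    obtain ⟨rfl⟩ : c = (h, Tm.clone a) := by cases hs; rfl
    refine ⟨0, h, a, le_refl 0, StepN.refl _, ?_, Or.inl ⟨rfl, rfl⟩⟩
    rintro ⟨⟨h', a'⟩, hst⟩
    exact hirr ⟨(h', Tm.clone a'), sc_step_clone_lift hst⟩
  | succ m ih =>
    obtain ⟨c₁, hstep, hsn⟩ := sc_stepN_succ_inv hs
    rcases sc_step_clone_inv hstep with ⟨hval, hd⟩ | ⟨h', a', hst, rfl⟩
    · refine ⟨0, h, a, Nat.zero_le _, StepN.refl _, sc_val_irred hval h,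
        Or.inr ⟨c₁, Nat.succ_pos m, hval, hd, ?_⟩⟩
      simpa using hsn
    · obtain ⟨i', h₁, a₁, hle, hsn', hirr', hcase⟩ := ih hsn hirr
      refine ⟨i' + 1, h₁, a₁, Nat.succ_le_succ hle, sc_stepN_cons hst hsn', hirr', ?_⟩
      rcases hcase with ⟨rfl, hc⟩ | ⟨c₂, hlt, hval, hd, hsn₂⟩
      · exact Or.inl ⟨rfl, hc⟩
      · refine Or.inr ⟨c₂, Nat.succ_lt_succ hlt, hval, hd, ?_⟩
        have harith : m - i' - 1 = (m + 1) - (i' + 1) - 1 := by omega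
        rwa [harith] at hsn₂
theorem sc_papprox_le_of_le {σ τ : PreType} {m j : ℕ} (hmj : m ≤ j)
    (h : papprox σ j ⊆ papprox τ j) : papprox σ m ⊆ papprox τ m := by
  rintro t ⟨ht, hlt⟩
  exact ⟨(h ⟨ht, lt_of_lt_of_le hlt hmj⟩).1, hlt⟩

theorem sc_papprox_eq_of_le {σ τ : PreType} {m j : ℕ} (hmj : m ≤ j)
    (h : papprox σ j = papprox τ j) : papprox σ m = papprox τ m :=
  Set.Subset.antisymm (sc_papprox_le_of_le hmj h.le) (sc_papprox_le_of_le hmj h.ge)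

theorem sc_lookA_congr {k : ℕ} {Ψ Ψ' : HPT k} {l l' : Loc} (h : Ψ.1 l = Ψ'.1 l')
    (j : ℕ) : Ψ.lookA j l = Ψ'.lookA j l' := by
  simp [HPT.lookA, HPT.look, h]

/-- The heap typing after a clone step. -/
noncomputable def scPsi {K : ℕ} (n : ℕ) (Ψ₁ : HPT K) (E : Finset MethName)
    (ls ls' : MethName → Loc) : HPT n :=
  ⟨scCopy E ls' ((Ψ₁.trunc n).1) (fun e => (Ψ₁.trunc n).1 (ls e)),
   ((Ψ₁.trunc n).2.union (E.finite_toSet.image ls')).subset sc_copy_dom⟩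

theorem scPsi_fn {K : ℕ} (n : ℕ) (Ψ₁ : HPT K) (E : Finset MethName)
    (ls ls' : MethName → Loc) :
    (scPsi n Ψ₁ E ls ls').1 =
      scCopy E ls' ((Ψ₁.trunc n).1) (fun e => (Ψ₁.trunc n).1 (ls e)) := rfl

theorem sc_clone_core (D : Finset MethName) (ν : MethName → Variance) (τs : MethName → PreType)
    {K n : ℕ} (hnK : n < K) (Ψ₁ : HPT K) (hTy₁ : Ψ₁.IsTy) (h₁ h₂ : Heap)
    (hok₁ : HeapOk h₁ Ψ₁) (E : Finset MethName) (ls ls' : MethName → Loc)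
    (w : CVal) (hw : w.1 = Tm.vobj E ls)
    (hmem : objSlice D ν τs K Ψ₁ w)
    (hfresh : ∀ e ∈ E, h₁.fn (ls' e) = none)
    (hinj : Set.InjOn ls' ↑E)
    (hcopy : ∀ e ∈ E, h₂.fn (ls' e) = h₁.fn (ls e))
    (hrest : ∀ l, (∀ e ∈ E, ls' e ≠ l) → h₂.fn l = h₁.fn l) :
    ∃ Ψ' : HPT n, Ψ'.IsTy ∧ StExt ⟨K, Ψ₁⟩ ⟨n, Ψ'⟩ ∧ HeapOk h₂ Ψ' ∧
      ∀ w' : CVal, w'.1 = Tm.vobj E ls' → objSlice D ν τs n Ψ' w' := by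
  classical
  have hnK' : n ≤ K := le_of_lt hnK
  -- unpack the object-type membership
  rw [objSlice] at hmem
  obtain ⟨E₀, ls₀, hw₀, hDE, α', hsem, hsub, hrefs, hobj3⟩ := hmem
  rw [hw] at hw₀
  obtain ⟨rfl, rfl⟩ : E = E₀ ∧ ls = ls₀ := by
    injection hw₀ with h1 h2; exact ⟨h1, h2⟩
  -- the new heap typing
  refine ⟨scPsi n Ψ₁ E ls ls', ?_⟩
  set Ψ' : HPT n := scPsi n Ψ₁ E ls ls' with hΨ'
  -- basic facts about Ψ'
  have hfn_new : ∀ e ∈ E, Ψ'.1 (ls' e) = (Ψ₁.trunc n).1 (ls e) := by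
    intro e he
    rw [hΨ', scPsi_fn]
    exact sc_copy_mem hinj he
  have hnotdom : ∀ e ∈ E, ∀ l ∈ Ψ₁.dom, ls' e ≠ l := by
    intro e he l hl heq
    exact (hok₁.1 l hl) (heq ▸ hfresh e he)
  have hfn_old : ∀ l, (∀ e ∈ E, ls' e ≠ l) → Ψ'.1 l = (Ψ₁.trunc n).1 l := by
    intro l hl
    rw [hΨ', scPsi_fn]
    exact sc_copy_not hl
  have hfn_old' : ∀ l ∈ Ψ₁.dom, Ψ'.1 l = (Ψ₁.trunc n).1 l := by
    intro l hl
    exact hfn_old l (fun e he => hnotdom e he l hl)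
  have hany : ∀ l S, Ψ'.1 l = some S → ∃ l₀, (Ψ₁.trunc n).1 l₀ = some S ∧
      h₂.fn l = h₁.fn l₀ := by
    intro l S hS
    by_cases hc : ∃ e, e ∈ E ∧ ls' e = l
    · obtain ⟨e, he, rfl⟩ := hc
      exact ⟨ls e, (hfn_new e he) ▸ hS, hcopy e he⟩
    · have hne : ∀ e ∈ E, ls' e ≠ l := fun e he heq => hc ⟨e, he, heq⟩
      refine ⟨l, ?_, hrest l hne⟩
      rwa [hfn_old l hne] at hS
  have htruncdom : ∀ l ∈ Ψ₁.dom, (Ψ₁.trunc n).1 l ≠ none := by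
    intro l hl
    have := (sc_dom_trunc Ψ₁ n) ▸ hl
    exact this
  have hdom : Ψ₁.dom ⊆ Ψ'.dom := by
    intro l hl
    have heq : Ψ'.1 l = (Ψ₁.trunc n).1 l := hfn_old' l hl
    simp only [HPT.dom, Set.mem_setOf_eq, heq]
    exact htruncdom l hl
  have hlookold : ∀ m, m ≤ n → ∀ l ∈ Ψ₁.dom, Ψ'.lookA m l = Ψ₁.lookA m l := by
    intro m hm l hl
    rw [sc_lookA_congr (hfn_old' l hl) m, sc_lookA_trunc Ψ₁ hm l]
  have hext : StExt ⟨K, Ψ₁⟩ ⟨n, Ψ'⟩ :=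
    ⟨hnK', hdom, fun l hl => hlookold n le_rfl l hl⟩
  -- every entry of Ψ' is an entry of `Ψ₁.trunc n`
  have hIsTy : Ψ'.IsTy := by
    intro l S hS
    obtain ⟨l₀, hl₀, -⟩ := hany l S hS
    exact sc_IsTy_trunc hTy₁ n l₀ S hl₀
  -- state extension between truncations
  have htrext : ∀ m, m ≤ n → StExt ⟨m, Ψ₁.trunc m⟩ ⟨m, Ψ'.trunc m⟩ := by
    intro m hm
    refine ⟨le_rfl, ?_, ?_⟩
    · rw [sc_dom_trunc, sc_dom_trunc]
      exact hdom
    · intro l hl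
      rw [sc_dom_trunc] at hl
      rw [sc_lookA_trunc Ψ' le_rfl l, sc_lookA_trunc Ψ₁ le_rfl l]
      exact hlookold m hm l hl
  have hok₂ : HeapOk h₂ Ψ' := by
    constructor
    · intro l hl
      by_cases hc : ∃ e, e ∈ E ∧ ls' e = l
      · obtain ⟨e, he, rfl⟩ := hc
        rw [hcopy e he]
        have hne : Ψ'.1 (ls' e) ≠ none := hl
        rw [hfn_new e he, sc_trunc_fn] at hne
        intro h0
        apply hne
        have hnodom : Ψ₁.1 (ls e) = none := by
          by_contra hne'
          exact (hok₁.1 _ hne') h0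
        rw [hnodom]; rfl
      · have hne' : ∀ e ∈ E, ls' e ≠ l := fun e he heq => hc ⟨e, he, heq⟩
        rw [hrest l hne']
        intro h0
        have hne : Ψ'.1 l ≠ none := hl
        rw [hfn_old l hne', sc_trunc_fn] at hne
        apply hne
        have hnodom : Ψ₁.1 l = none := by
          by_contra hne2
          exact (hok₁.1 l hne2) h0
        rw [hnodom]; rfl
    · intro m hm l S' hS' v hv
      obtain ⟨l₀, hl₀, hfeq⟩ := hany l S' hS'
      rw [sc_trunc_fn] at hl₀
      cases hΨ₁ : Ψ₁.1 l₀ with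
      | none => rw [hΨ₁] at hl₀; simp at hl₀
      | some S =>
        rw [hΨ₁] at hl₀
        simp only [Option.map_some] at hl₀
        obtain rfl := Option.some.inj hl₀
        rw [sc_seg_toApprox]
        have hv₁ : h₁.fn l₀ = some v := hfeq ▸ hv
        have hmem₁ : (⟨m, Ψ₁.trunc m, v⟩ : Triple) ∈ Approx.seg S :=
          hok₁.2 m (lt_trans hm hnK) l₀ S hΨ₁ v hv₁
        have hmemS : (⟨m, Ψ'.trunc m, v⟩ : Triple) ∈ Approx.seg S :=
          hTy₁ l₀ S hΨ₁ _ hmem₁ m (Ψ'.trunc m) (htrext m (le_of_lt hm))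
        exact ⟨hmemS, hm⟩
  refine ⟨hIsTy, hext, hok₂, ?_⟩
  intro w' hw'
  rw [objSlice]
  refine ⟨E, ls', hw', hDE, α', hsem, ?_, ?_, ?_⟩
  · intro t ht
    obtain ⟨hltK, hslice⟩ := hsub (sc_papprox_subset α' hnK' ht)
    exact ⟨ht.2, hslice⟩
  · intro d hd
    have hrd := hrefs d hd
    have hfnd : Ψ'.1 (ls' d) = (Ψ₁.trunc n).1 (ls d) := hfn_new d (hDE hd)
    cases hν : ν d <;> rw [hν] at hrd <;>
      obtain ⟨S, hS, hrel⟩ := hrd <;>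
      refine ⟨toApprox (Approx.seg S) n, ?_, ?_⟩ <;>
      try (rw [hfnd, sc_trunc_fn, hS]; rfl)
    · -- inv
      rw [sc_seg_toApprox, sc_papprox_papprox _ (le_refl n)]
      exact sc_papprox_eq_of_le hnK' hrel
    · -- cov
      rw [sc_seg_toApprox, sc_papprox_papprox _ (le_refl n)]
      exact sc_papprox_le_of_le hnK' hrel
    · -- con
      rw [sc_seg_toApprox, sc_papprox_papprox _ (le_refl n)]
      exact sc_papprox_le_of_le hnK' hrel
  · intro m hm Ψ'' ls'' hext'' hlook''
    refine hobj3 m (lt_trans hm hnK) Ψ'' ls'' (sc_stext_trans hext hext'') ?_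
    intro e he
    rw [hlook'' e he, sc_lookA_congr (hfn_new e he) m, sc_lookA_trunc Ψ₁ (le_of_lt hm) (ls e)]
/-- **(SemClone) Object cloning.** If `Σ ⊨ a : [m_d :ν_d τ_d]_{d∈D}` then
`Σ ⊨ clone(a) : [m_d :ν_d τ_d]_{d∈D}`. -/
theorem semClone (D : Finset MethName) (ν : MethName → Variance) (τs : MethName → PreType)
    (hτ : ∀ d ∈ D, IsSemType (τs d)) (Γ : SemEnv) (hΓ : EnvSem Γ)
    (a : Tm) (h : SemJudg Γ a (objTy D ν τs)) :
    SemJudg Γ (Tm.clone a) (objTy D ν τs) := by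
  obtain ⟨hfv, hsem⟩ := h
  refine ⟨hfv, ?_⟩
  intro k Ψ hTy σ hσ
  have hty : HasTypeAt (msubst a (toSubst σ)) Ψ (objTy D ν τs) := hsem k Ψ hTy σ hσ
  intro j hj h0 h' b hok hstep hirr
  have hstep' : StepN j (h0, Tm.clone (msubst a (toSubst σ))) (h', b) := hstep
  obtain ⟨i, h₁, a₁, hij, hsn, hirr₁, hcase⟩ := sc_stepN_clone_decomp hstep' hirr
  rcases hcase with ⟨rfl, hc⟩ | ⟨c₂, hlt, hval₁, hd, hsn₂⟩
  · -- the subterm got stuck: contradiction, since a value of object type can be cloned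
    exfalso
    obtain ⟨Ψ₁, hTy₁, hext₁, hok₁, ⟨hb, hmem⟩⟩ :=
      hty i hj h0 h₁ a₁ hok hsn hirr₁
    have hmem' : objSlice D ν τs (k - i) Ψ₁ ⟨a₁, hb⟩ := hmem
    replace hmem' := (objSlice.eq_1 D ν τs (k - i) Ψ₁ ⟨a₁, hb⟩).mp hmem'
    obtain ⟨E, ls, hw, -⟩ := hmem'
    have hw' : a₁ = Tm.vobj E ls := hw
    obtain ⟨c₂, hd⟩ := sc_clone_progress h₁ E ls
    refine hirr ⟨c₂, ?_⟩
    have : (h', b) = (h₁, Tm.clone a₁) := hc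
    rw [this, hw']
    exact Step.ctx ECtx.hole hd
  ·
    obtain ⟨Ψ₁, hTy₁, hext₁, hok₁, ⟨hb, hmem⟩⟩ :=
      hty i (lt_trans hlt hj) h0 h₁ a₁ hok hsn hirr₁
    have hmem' : objSlice D ν τs (k - i) Ψ₁ ⟨a₁, hb⟩ := hmem
    -- extract the object shape
    obtain ⟨E, ls, hw, -⟩ := (objSlice.eq_1 D ν τs (k - i) Ψ₁ ⟨a₁, hb⟩).mp hmem'
    have hw' : a₁ = Tm.vobj E ls := hw
    -- invert the head clone step
    rw [hw'] at hd
    cases hd with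
    | clone hfresh hinj hcopy hrest =>
      rename_i h₂ ls'
      -- the remaining steps are from a value, hence none
      have hirr₂ : Irred (h₂, Tm.vobj E ls') := sc_val_irred (IsVal.vobj E ls') h₂
      obtain ⟨hz, hcc⟩ := sc_irred_zero hsn₂ hirr₂
      have hbeq : (h', b) = (h₂, Tm.vobj E ls') := hcc
      have hh' : h' = h₂ := congrArg Prod.fst hbeq
      have hbv : b = Tm.vobj E ls' := congrArg Prod.snd hbeq
      subst hh'; subst hbv
      have hji : j = i + 1 := by omega
      have hnK : k - j < k - i := by omega
      obtain ⟨Ψ', hIsTy, hext', hok₂, hmem₂⟩ :=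
        sc_clone_core D ν τs hnK Ψ₁ hTy₁ h₁ h' hok₁ E ls ls' ⟨a₁, hb⟩ hw' hmem'
          hfresh hinj hcopy hrest
      refine ⟨Ψ', hIsTy, sc_stext_trans hext₁ hext', hok₂,
        ⟨IsVal.vobj E ls', rfl⟩, ?_⟩
      exact hmem₂ ⟨Tm.vobj E ls', IsVal.vobj E ls', rfl⟩ rfl
end ImpObj
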